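/- Let q, h, a : ℝ → E³ together with a conical curvature κ : ℝ → ℝ be a Frenet frame of a ruled surface with κ(s) ≠ 0 for all s. If u ∈ E³ is a fixed vector such that ⟪q(s), u⟫ = 0 for all s (u is everywhere perpendicular to the ruling), then u = 0. -/
import Mathlib


open RealInnerProductSpace Matrix

noncomputable section

abbrev E3 := EuclideanSpace ℝ (Fin 3)

/-- A Frenet frame of a ruled surface: `q`, `h`, `a` are orthonormal at every
parameter and satisfy the Frenet equations with conical curvature `κ`. -/
def IsFrenetFrame (q h a : ℝ → E3) (κ : ℝ → ℝ) : Prop :=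
  (∀ s, ⟪q s, q s⟫ = 1 ∧ ⟪h s, h s⟫ = 1 ∧ ⟪a s, a s⟫ = 1 ∧
        ⟪q s, h s⟫ = 0 ∧ ⟪q s, a s⟫ = 0 ∧ ⟪h s, a s⟫ = 0) ∧
  (∀ s, HasDerivAt q (h s) s) ∧
  (∀ s, HasDerivAt h (-q s + κ s • a s) s) ∧
  (∀ s, HasDerivAt a (-(κ s • h s)) s)

/-- The Darboux vector of the frame. -/
def darboux (q a : ℝ → E3) (κ : ℝ → ℝ) : ℝ → E3 := fun s => κ s • q s + a s

theorem perp_to_ruling_eq_zero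
    (q h a : ℝ → E3) (κ : ℝ → ℝ)
    (hframe : IsFrenetFrame q h a κ)
    (hκne : ∀ s, κ s ≠ 0)
    (u : E3) (hperp : ∀ s, ⟪q s, u⟫ = 0) :
    u = 0 := by
  obtain ⟨horth, hq, hh, ha⟩ := hframe
  have hqfun : (fun s => ⟪q s, u⟫) = fun _ => (0 : ℝ) := funext hperp
  have hhu : ∀ s, ⟪h s, u⟫ = 0 := by
    intro s
    have h1 : HasDerivAt (fun t => ⟪q t, u⟫) (⟪q s, (0:E3)⟫ + ⟪h s, u⟫) s :=
      (hq s).inner ℝ (hasDerivAt_const s u)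
    have h2 : HasDerivAt (fun t => ⟪q t, u⟫) 0 s := by
      rw [hqfun]; exact hasDerivAt_const s 0
    have := h1.unique h2
    simpa using this
  have hhfun : (fun s => ⟪h s, u⟫) = fun _ => (0 : ℝ) := funext hhu
  have hau : ∀ s, ⟪a s, u⟫ = 0 := by
    intro s
    have h1 : HasDerivAt (fun t => ⟪h t, u⟫) (⟪h s, (0:E3)⟫ + ⟪-q s + κ s • a s, u⟫) s :=
      (hh s).inner ℝ (hasDerivAt_const s u)
    have h2 : HasDerivAt (fun t => ⟪h t, u⟫) 0 s := by
      rw [hhfun]; exact hasDerivAt_const s 0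
    have h3 := h1.unique h2
    rw [inner_zero_right, zero_add, inner_add_left, inner_neg_left, hperp s,
      real_inner_smul_left, neg_zero, zero_add] at h3
    exact (mul_eq_zero.mp h3).resolve_left (hκne s)
  -- q 0, h 0, a 0 form an orthonormal basis; u is orthogonal to all of them
  set f : Fin 3 → E3 := ![q 0, h 0, a 0] with hf
  have hon : Orthonormal ℝ f := by
    rw [orthonormal_iff_ite]
    obtain ⟨h1, h2, h3, h4, h5, h6⟩ := horth 0
    intro i j
    fin_cases i <;> fin_cases j <;>
      simp only [hf, Fin.mk_zero, Fin.mk_one, show (⟨2, by omega⟩ : Fin 3) = 2 from rfl,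
        Matrix.cons_val_zero, Matrix.cons_val_one, Matrix.head_cons,
        Matrix.cons_val_two, Matrix.tail_cons, Fin.isValue] <;>
      first
        | (rw [if_pos trivial]; first | exact h1 | exact h2 | exact h3)
        | (rw [if_neg (by decide)];
           first
             | exact h4 | exact h5 | exact h6
             | (rw [real_inner_comm]; first | exact h4 | exact h5 | exact h6))
  have hcard : Fintype.card (Fin 3) = Module.finrank ℝ E3 := by simp
  have hspan : Submodule.span ℝ (Set.range f) = ⊤ := by
    have := (basisOfOrthonormalOfCardEqFinrank hon hcard).span_eq
    rwa [coe_basisOfOrthonormalOfCardEqFinrank] at this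
  have hu : u ∈ (Submodule.span ℝ (Set.range f))ᗮ := by
    rw [Submodule.mem_orthogonal]
    intro v hv
    refine Submodule.span_induction ?_ ?_ ?_ ?_ hv
    · rintro x ⟨i, rfl⟩
      fin_cases i <;> simp [hf, hperp 0, hhu 0, hau 0]
    · simp
    · intro x y _ _ hx hy; rw [inner_add_left, hx, hy, add_zero]
    · intro c x _ hx; rw [inner_smul_left, hx, mul_zero]
  rw [hspan, Submodule.top_orthogonal_eq_bot, Submodule.mem_bot] at hu
  exact hu
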